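/- Let Z = {z_1,…,z_n} with n ≥ 4 and let D = {D_1,…,D_m} be a family of 4-element subsets of Z in which every element of Z belongs to exactly 3 members. Define a set of parties C = A ∪ E with A = {c_1,…,c_m} (party c_j corresponding to subset D_j) and E = {e_1,…,e_{3n+1}}, and 2n voters with linear orders: for 1 ≤ i ≤ n, order O_i ranks e_1 first, then in positions 2–4 the three parties c_j with z_i ∈ D_j (in some fixed order), then e_2,…,e_{3n+1}, then the remaining parties of A in some fixed order; for n+1 ≤ i ≤ 2n, order O_i ranks e_1 first, then e_2,…,e_{3n+1}, then all parties of A in some fixed order. Call a tuple Ô = (Ô_1,…,Ô_{2n}) of linear orders a legal coalition-shift bribe if, for each voter i, every pair of parties whose relative order differs between O_i and Ô_i consists of a party of A that is below the other party in O_i and above it in Ô_i; the cost of Ô is the total number, over all voters, of such changed pairs. Given Ô, say a party c is active if at least 4 voters rank c first in Ô, and let av(c) be the number of voters ranking c first if c is active and 0 otherwise. Then there exists a legal coalition-shift bribe Ô of cost at most 3n with Σ_{c∈A} av(c) ≥ Σ_{c∈E} av(c) if and only if D contains an exact cover of Z. -/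

import Mathlib

open Finset

namespace Stmt2

/-- The parties: `Sum.inl j` is the coalition party `c_{j+1}` (corresponding to the
subset `D_{j+1}`), and `Sum.inr k` is the party `e_{k+1}`. -/
abbrev Party (m n : ℕ) := Fin m ⊕ Fin (3 * n + 1)

/-- A linear order on the `m + (3n+1)` parties; `(O c).val + 1` is the position of `c`,
position 1 (i.e. value `0`) being the top. -/
abbrev Ord (m n : ℕ) := Party m n ≃ Fin (m + (3 * n + 1))

/-- Number of pairs whose relative order differs between `O` and `Ob`, oriented so that
in each pair `(x, y)` the party `y` is below `x` in `O` and above `x` in `Ob`. -/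
def invCount {m n : ℕ} (O Ob : Ord m n) : ℕ :=
  ((Finset.univ : Finset (Party m n × Party m n)).filter
    fun q => O q.1 < O q.2 ∧ Ob q.2 < Ob q.1).card

/-- Number of voters ranking party `c` first under the profile `Ob`. -/
def votes {m n : ℕ} (Ob : Fin (2 * n) → Ord m n) (c : Party m n) : ℕ :=
  (Finset.univ.filter fun i : Fin (2 * n) => ((Ob i) c).val = 0).card

/-- Active vote count: the number of voters ranking `c` first if it is at least 4
(i.e. `c` is active), and `0` otherwise. -/
def av {m n : ℕ} (Ob : Fin (2 * n) → Ord m n) (c : Party m n) : ℕ :=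
  if 4 ≤ votes Ob c then votes Ob c else 0

/-! ### Auxiliary lemmas -/

lemma card_filter_lt_fin {N : ℕ} (t : Fin N) :
    ((univ : Finset (Fin N)).filter fun a => a < t).card = t.val := by
  have : ((univ : Finset (Fin N)).filter fun a => a < t) = Finset.Iio t := by
    ext a; simp
  rw [this, Fin.card_Iio]

lemma card_filter_lt_party {m n : ℕ} (O : Ord m n) (t : Fin (m + (3*n+1))) :
    ((univ : Finset (Party m n)).filter fun x => O x < t).card = t.val := by
  rw [← card_filter_lt_fin t]
  exact Finset.card_equiv O (by simp)

lemma invCount_self {m n : ℕ} (O : Ord m n) : invCount O O = 0 := by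
  rw [invCount, Finset.card_eq_zero, Finset.filter_eq_empty_iff]
  rintro q - ⟨h1, h2⟩
  exact absurd h1 (not_lt.mpr h2.le)

lemma invCount_trans {m n : ℕ} (O : Ord m n) (σ : Equiv.Perm (Fin (m + (3*n+1)))) :
    invCount O (O.trans σ) =
      ((univ : Finset (Fin (m + (3*n+1)) × Fin (m + (3*n+1)))).filter
        fun q => q.1 < q.2 ∧ σ q.2 < σ q.1).card := by
  exact Finset.card_equiv (O.prodCongr O) (by intro q; simp only [mem_filter, mem_univ, true_and]; rfl)

lemma invCount_ge {m n : ℕ} (O Ob : Ord m n) (c : Party m n) (hc : (Ob c).val = 0) :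
    (O c).val ≤ invCount O Ob := by
  rw [← card_filter_lt_party O (O c)]
  apply Finset.card_le_card_of_injOn (fun x => (x, c))
  · intro x hx
    simp only [mem_coe, mem_filter, mem_univ, true_and] at hx ⊢
    refine ⟨hx, ?_⟩
    have hxc : x ≠ c := fun h => absurd (h ▸ hx) (lt_irrefl _)
    have : Ob x ≠ Ob c := fun h => hxc (Ob.injective h)
    rw [Fin.lt_iff_val_lt_val, hc]
    omega
  · intro x _ y _ h
    exact (Prod.mk.injEq _ _ _ _).mp h |>.1

lemma cr_pair {N : ℕ} (v a b : Fin N) :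
    (a < b ∧ Fin.cycleRange v b < Fin.cycleRange v a) ↔ (b = v ∧ a < v) := by
  cases N with
  | zero => exact v.elim0
  | succ N =>
    constructor
    · rintro ⟨hab, h⟩
      rw [Fin.lt_iff_val_lt_val] at h hab
      rcases lt_trichotomy b v with hb | hb | hb
      · have ha : a < v := lt_of_le_of_lt (Fin.le_iff_val_le_val.mpr hab.le) hb
        rw [Fin.coe_cycleRange_of_lt hb, Fin.coe_cycleRange_of_lt ha] at h
        omega
      · exact ⟨hb, hb ▸ Fin.lt_iff_val_lt_val.mpr hab⟩
      · exfalso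
        have hbv : (Fin.cycleRange v b).val = b.val := by rw [Fin.cycleRange_of_gt hb]
        rcases lt_trichotomy a v with ha | ha | ha
        · rw [Fin.coe_cycleRange_of_lt ha, hbv] at h
          have := Fin.lt_iff_val_lt_val.mp (ha.trans hb)
          have := Fin.lt_iff_val_lt_val.mp ha
          omega
        · rw [ha, Fin.cycleRange_self, hbv] at h
          simp at h
        · rw [hbv, Fin.cycleRange_of_gt ha] at h
          omega
    · rintro ⟨rfl, ha⟩
      refine ⟨ha, ?_⟩
      rw [Fin.lt_iff_val_lt_val, Fin.cycleRange_self, Fin.coe_cycleRange_of_lt ha]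
      simp

lemma cr_val_of_lt {N : ℕ} {v a : Fin N} (h : a < v) :
    (Fin.cycleRange v a).val = a.val + 1 := by
  cases N with
  | zero => exact v.elim0
  | succ N => exact Fin.coe_cycleRange_of_lt h

lemma cr_val_of_gt {N : ℕ} {v a : Fin N} (h : v < a) :
    (Fin.cycleRange v a).val = a.val := by
  cases N with
  | zero => exact v.elim0
  | succ N => rw [Fin.cycleRange_of_gt h]

lemma cr_val_self {N : ℕ} (v : Fin N) : (Fin.cycleRange v v).val = 0 := by
  cases N with
  | zero => exact v.elim0
  | succ N => rw [Fin.cycleRange_self]; rfl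

lemma invCount_cycle {m n : ℕ} (O : Ord m n) (v : Fin (m + (3*n+1))) :
    invCount O (O.trans (Fin.cycleRange v)) = v.val := by
  rw [invCount_trans]
  have heq : ((univ : Finset (Fin (m+(3*n+1)) × Fin (m+(3*n+1)))).filter
      fun q => q.1 < q.2 ∧ Fin.cycleRange v q.2 < Fin.cycleRange v q.1)
      = ((univ.filter fun a => a < v).image fun a => (a, v)) := by
    ext ⟨a, b⟩
    simp only [mem_filter, mem_univ, true_and, mem_image, Prod.mk.injEq]
    constructor
    · intro h
      obtain ⟨hb, ha⟩ := (cr_pair v a b).mp h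
      exact ⟨a, ha, rfl, hb.symm⟩
    · rintro ⟨x, hx, rfl, rfl⟩
      exact (cr_pair v x v).mpr ⟨rfl, hx⟩
  rw [heq, Finset.card_image_of_injective _ (fun x y h => ((Prod.mk.injEq _ _ _ _).mp h).1),
    card_filter_lt_fin]

lemma card_voters_lt {n : ℕ} (hn : 0 < n) :
    ((univ : Finset (Fin (2*n))).filter fun i => i.val < n).card = n := by
  have h : ((univ : Finset (Fin (2*n))).filter fun i => i.val < n).card
      = (Finset.range n).card := by
    apply Finset.card_nbij' (fun i => i.val) (fun a => ⟨a % (2*n), Nat.mod_lt _ (by omega)⟩)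
    · intro a ha; simp only [mem_coe, mem_filter] at ha; simpa using ha.2
    · intro a ha; simp only [mem_coe, Finset.mem_range] at ha
      simp only [mem_coe, mem_filter, mem_univ, true_and]
      simpa [Nat.mod_eq_of_lt (by omega : a < 2*n)] using ha
    · intro a ha
      exact Fin.ext (by simp [Nat.mod_eq_of_lt a.isLt])
    · intro a ha; simp only [mem_coe, Finset.mem_range] at ha
      simp [Nat.mod_eq_of_lt (by omega : a < 2*n)]
  rw [h, Finset.card_range]

lemma card_voters_ge {n : ℕ} (hn : 0 < n) :
    ((univ : Finset (Fin (2*n))).filter fun i => n ≤ i.val).card = n := by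
  have h : ((univ : Finset (Fin (2*n))).filter fun i => n ≤ i.val).card
      = (Finset.range n).card := by
    apply Finset.card_nbij' (fun i => i.val - n)
      (fun a => ⟨(a + n) % (2*n), Nat.mod_lt _ (by omega)⟩)
    · intro a ha; simp only [mem_coe, mem_filter] at ha
      simp only [mem_coe, Finset.mem_range]
      have := a.isLt; omega
    · intro a ha; simp only [mem_coe, Finset.mem_range] at ha
      simp only [mem_coe, mem_filter, mem_univ, true_and]
      rw [Nat.mod_eq_of_lt (by omega)]; omega
    · intro a ha; simp only [mem_coe, mem_filter, mem_univ, true_and] at ha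
      have h2 : ↑a - n + n = ↑a := by omega
      exact Fin.ext (by dsimp only; rw [h2]; exact Nat.mod_eq_of_lt a.isLt)
    · intro a ha; simp only [mem_coe, Finset.mem_range] at ha
      have : (a + n) % (2*n) = a + n := Nat.mod_eq_of_lt (by omega)
      simp [this]
  rw [h, Finset.card_range]

def topParty {m n : ℕ} (O : Ord m n) : Party m n := O.symm ⟨0, Nat.succ_pos _⟩

lemma eq_top_iff {m n : ℕ} (O : Ord m n) (c : Party m n) :
    (O c).val = 0 ↔ c = topParty O := by
  constructor
  · intro h
    have : O c = ⟨0, Nat.succ_pos _⟩ := Fin.ext h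
    rw [topParty, ← this, Equiv.symm_apply_apply]
  · rintro rfl
    simp [topParty]

lemma top_val {m n : ℕ} (O : Ord m n) : (O (topParty O)).val = 0 := by
  simp [topParty]

lemma votes_sum {m n : ℕ} (Ob : Fin (2*n) → Ord m n) :
    ∑ c : Party m n, votes Ob c = 2 * n := by
  unfold votes
  simp_rw [Finset.card_filter]
  rw [Finset.sum_comm]
  have h1 : ∀ i : Fin (2*n),
      (∑ c : Party m n, if ((Ob i) c).val = 0 then 1 else 0) = 1 := by
    intro i
    rw [← Finset.card_filter]
    have : ((univ : Finset (Party m n)).filter fun c => ((Ob i) c).val = 0)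
        = {topParty (Ob i)} := by
      ext c
      simp only [mem_filter, mem_univ, true_and, mem_singleton]
      exact eq_top_iff (Ob i) c
    rw [this, Finset.card_singleton]
  rw [Finset.sum_congr rfl fun i _ => h1 i]
  simp [Finset.card_univ]

lemma card_filter_le_val {m n : ℕ} (O : Ord m n) (B : ℕ) :
    ((univ : Finset (Party m n)).filter fun p => (O p).val ≤ B).card ≤ B + 1 := by
  have := Finset.card_le_card_of_injOn (fun p => (O p).val)
    (s := (univ : Finset (Party m n)).filter fun p => (O p).val ≤ B)
    (t := Finset.range (B+1))
    (by intro p hp; simp only [mem_coe, mem_filter] at hp; simp only [mem_coe, Finset.mem_range]; omega)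
    (by intro p _ q _ h; exact O.injective (Fin.ext h))
  simpa using this

lemma inl_high {m n : ℕ} (O : Ord m n)
    (hE : ∀ k : Fin (3*n+1), (O (Sum.inr k)).val ≤ 3*n) (j : Fin m) :
    3*n+1 ≤ (O (Sum.inl j)).val := by
  by_contra h
  push_neg at h
  have hsub : insert (Sum.inl j : Party m n)
      ((univ : Finset (Fin (3*n+1))).image (Sum.inr : Fin (3*n+1) → Party m n)) ⊆
      ((univ : Finset (Party m n)).filter fun p => (O p).val ≤ 3*n) := by
    intro p hp
    simp only [Finset.mem_insert, Finset.mem_image] at hp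
    simp only [mem_filter, mem_univ, true_and]
    rcases hp with rfl | ⟨k, -, rfl⟩
    · omega
    · exact hE k
  have hcard : (insert (Sum.inl j : Party m n)
      ((univ : Finset (Fin (3*n+1))).image (Sum.inr : Fin (3*n+1) → Party m n))).card = 3*n+2 := by
    rw [Finset.card_insert_of_notMem (by simp), Finset.card_image_of_injective _
      Sum.inr_injective, Finset.card_univ, Fintype.card_fin]
  have := (Finset.card_le_card hsub).trans (card_filter_le_val O (3*n))
  omega

lemma inl_high' {m n : ℕ} (O : Ord m n) (z : Fin n) (D : Fin m → Finset (Fin n))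
    (hD3 : ((univ : Finset (Fin m)).filter fun j => z ∈ D j).card = 3)
    (h0 : (O (Sum.inr 0)).val = 0)
    (hfc : ∀ j, z ∈ D j ↔ 1 ≤ (O (Sum.inl j)).val ∧ (O (Sum.inl j)).val ≤ 3)
    (hfe : ∀ k : Fin (3*n+1), k ≠ 0 → 4 ≤ (O (Sum.inr k)).val ∧ (O (Sum.inr k)).val ≤ 3*n+3)
    (j : Fin m) (hj : z ∉ D j) : 3*n+4 ≤ (O (Sum.inl j)).val := by
  by_contra h
  push_neg at h
  set S : Finset (Party m n) :=
    (((univ : Finset (Fin m)).filter fun j' => z ∈ D j').image (Sum.inl : Fin m → Party m n))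
    ∪ ((univ : Finset (Fin (3*n+1))).image (Sum.inr : Fin (3*n+1) → Party m n)) with hS
  have hsub : insert (Sum.inl j : Party m n) S ⊆
      ((univ : Finset (Party m n)).filter fun p => (O p).val ≤ 3*n+3) := by
    intro p hp
    simp only [hS, Finset.mem_insert, Finset.mem_union, Finset.mem_image, mem_filter,
      mem_univ, true_and] at hp ⊢
    rcases hp with rfl | ⟨j', hj', rfl⟩ | ⟨k, -, rfl⟩
    · omega
    · have := (hfc j').mp hj'; omega
    · by_cases hk : k = 0
      · subst hk; omega
      · exact ((hfe k hk).2)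
  have hdisj : Disjoint
      (((univ : Finset (Fin m)).filter fun j' => z ∈ D j').image (Sum.inl : Fin m → Party m n))
      ((univ : Finset (Fin (3*n+1))).image (Sum.inr : Fin (3*n+1) → Party m n)) := by
    rw [Finset.disjoint_left]
    rintro p hp hq
    simp only [Finset.mem_image] at hp hq
    obtain ⟨a, -, rfl⟩ := hp
    obtain ⟨b, -, hb⟩ := hq
    exact Sum.inr_ne_inl hb
  have hcardS : S.card = 3*n+4 := by
    rw [hS, Finset.card_union_of_disjoint hdisj,
      Finset.card_image_of_injective _ Sum.inl_injective,
      Finset.card_image_of_injective _ Sum.inr_injective,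
      hD3, Finset.card_univ, Fintype.card_fin]
    omega
  have hnot : (Sum.inl j : Party m n) ∉ S := by
    simp only [hS, Finset.mem_union, Finset.mem_image, not_or]
    constructor
    · rintro ⟨j', hj', heq⟩
      simp only [mem_filter] at hj'
      cases Sum.inl_injective heq
      exact hj hj'.2
    · rintro ⟨k, -, hk⟩
      exact Sum.inr_ne_inl hk
  have hcard : (insert (Sum.inl j : Party m n) S).card = 3*n+5 := by
    rw [Finset.card_insert_of_notMem hnot, hcardS]
  have := (Finset.card_le_card hsub).trans (card_filter_le_val O (3*n+3))
  omega

/-- the reduction from 3-4-Exact-Cover to Plurality with threshold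
under coalition-shift-bribery: a legal coalition-shift bribe of cost at most `3n`
giving the coalition `A` at least as many active votes as `E` exists iff
`D` contains an exact cover of `Z`. -/
theorem stmt_2 (n m : ℕ) (hn : 4 ≤ n)
    (D : Fin m → Finset (Fin n))
    (hD4 : ∀ j, (D j).card = 4)
    (hD3 : ∀ z : Fin n, (Finset.univ.filter fun j => z ∈ D j).card = 3)
    (O : Fin (2 * n) → Ord m n)
    -- every voter ranks `e_1` first
    (htop : ∀ i, ((O i) (Sum.inr 0)).val = 0)
    -- for voters `i` with `i.val < n`: positions 2–4 (values 1–3) hold exactly the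
    -- three coalition parties `c_j` with `z_i ∈ D_j`
    (hfc : ∀ (i : Fin (2 * n)) (h : i.val < n), ∀ j : Fin m,
      ((⟨i.val, h⟩ : Fin n) ∈ D j ↔
        1 ≤ ((O i) (Sum.inl j)).val ∧ ((O i) (Sum.inl j)).val ≤ 3))
    -- for voters `i` with `i.val < n`: `e_2, …, e_{3n+1}` occupy positions 5–(3n+4)
    -- (values 4–(3n+3)); the remaining coalition parties follow
    (hfe : ∀ (i : Fin (2 * n)), i.val < n → ∀ k : Fin (3 * n + 1), k ≠ 0 →
      4 ≤ ((O i) (Sum.inr k)).val ∧ ((O i) (Sum.inr k)).val ≤ 3 * n + 3)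
    -- for voters `i` with `n ≤ i.val`: `e_2, …, e_{3n+1}` occupy positions 2–(3n+1)
    -- (values 1–3n); all coalition parties follow
    (hse : ∀ (i : Fin (2 * n)), n ≤ i.val → ∀ k : Fin (3 * n + 1), k ≠ 0 →
      1 ≤ ((O i) (Sum.inr k)).val ∧ ((O i) (Sum.inr k)).val ≤ 3 * n) :
    (∃ Ob : Fin (2 * n) → Ord m n,
      -- legal coalition-shift bribe: in every changed pair, the party moving up is in `A`
      (∀ i, ∀ x y : Party m n, (O i) x < (O i) y → (Ob i) y < (Ob i) x →
        ∃ j : Fin m, y = Sum.inl j) ∧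
      -- cost at most 3n
      (∑ i, invCount (O i) (Ob i)) ≤ 3 * n ∧
      -- the coalition's active votes are at least those of `E`
      (∑ k : Fin (3 * n + 1), av Ob (Sum.inr k)) ≤ ∑ j : Fin m, av Ob (Sum.inl j)) ↔
    (∃ J : Finset (Fin m),
      (∀ j ∈ J, ∀ j' ∈ J, j ≠ j' → Disjoint (D j) (D j')) ∧
      J.biUnion D = Finset.univ) := by
  constructor
  · -- forward direction: from a successful bribe, extract an exact cover
    rintro ⟨Ob, hleg, hcost, hav⟩
    classical
    have hcost_i : ∀ i, invCount (O i) (Ob i) ≤ 3*n := fun i =>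
      le_trans (Finset.single_le_sum (f := fun i => invCount (O i) (Ob i))
        (fun _ _ => Nat.zero_le _) (Finset.mem_univ i)) hcost
    have hpos : ∀ (i : Fin (2*n)) (k : Fin (3*n+1)), k ≠ 0 → 1 ≤ ((O i) (Sum.inr k)).val := by
      intro i k hk
      by_cases h : i.val < n
      · have := (hfe i h k hk).1; omega
      · have := (hse i (by omega) k hk).1; omega
    have htopOb : ∀ i : Fin (2*n),
        topParty (Ob i) = Sum.inr 0 ∨ ∃ j, topParty (Ob i) = Sum.inl j := by
      intro i
      rcases htp : topParty (Ob i) with j | k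
      · exact Or.inr ⟨j, rfl⟩
      · by_cases hk : k = 0
        · subst hk; exact Or.inl rfl
        · exfalso
          have h1 : (O i) (Sum.inr 0) < (O i) (Sum.inr k) := by
            rw [Fin.lt_iff_val_lt_val, htop i]; exact hpos i k hk
          have hk0 : ((Ob i) (Sum.inr k)).val = 0 := (eq_top_iff _ _).mpr htp.symm
          have h2 : (Ob i) (Sum.inr k) < (Ob i) (Sum.inr 0) := by
            rw [Fin.lt_iff_val_lt_val, hk0]
            have hne : ((Ob i) (Sum.inr 0)).val ≠ 0 := fun hh =>
              hk (Sum.inr_injective ((Ob i).injective (Fin.ext (by rw [hh, hk0])))).symm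
            omega
          obtain ⟨j, hj⟩ := hleg i (Sum.inr 0) (Sum.inr k) h1 h2
          exact Sum.inr_ne_inl hj
    have htopge : ∀ i : Fin (2*n), n ≤ i.val → topParty (Ob i) = Sum.inr 0 := by
      intro i hi
      rcases htopOb i with h | ⟨j, hj⟩
      · exact h
      · exfalso
        have hE : ∀ k : Fin (3*n+1), ((O i) (Sum.inr k)).val ≤ 3*n := by
          intro k
          by_cases hk : k = 0
          · subst hk; rw [htop i]; omega
          · exact (hse i hi k hk).2
        have h1 : 3*n+1 ≤ ((O i) (Sum.inl j)).val := inl_high (O i) hE j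
        have h2 : ((Ob i) (Sum.inl j)).val = 0 := (eq_top_iff _ _).mpr hj.symm
        have := invCount_ge (O i) (Ob i) (Sum.inl j) h2
        have := hcost_i i
        omega
    have hv1 : n ≤ votes Ob (Sum.inr 0) := by
      have hsubE : ((univ : Finset (Fin (2*n))).filter fun i => n ≤ i.val)
          ⊆ (univ.filter fun i => ((Ob i) (Sum.inr 0)).val = 0) := by
        intro i hi
        simp only [mem_filter, mem_univ, true_and] at hi ⊢
        exact (eq_top_iff _ _).mpr (htopge i hi).symm
      calc n = ((univ : Finset (Fin (2*n))).filter fun i => n ≤ i.val).card :=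
            (card_voters_ge (by omega)).symm
        _ ≤ _ := Finset.card_le_card hsubE
    have hsplit : (∑ j, votes Ob (Sum.inl j)) + (∑ k, votes Ob (Sum.inr k)) = 2*n := by
      rw [← Fintype.sum_sum_type]
      exact votes_sum Ob
    have hav_le : ∀ c, av Ob c ≤ votes Ob c := by
      intro c; rw [av]; split <;> omega
    have hEav : n ≤ ∑ k : Fin (3*n+1), av Ob (Sum.inr k) := by
      have h1 : av Ob (Sum.inr 0) = votes Ob (Sum.inr 0) := by
        rw [av, if_pos (by omega)]
      calc n ≤ av Ob (Sum.inr 0) := by omega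
        _ ≤ ∑ k : Fin (3*n+1), av Ob (Sum.inr k) :=
            Finset.single_le_sum (f := fun k : Fin (3*n+1) => av Ob (Sum.inr k))
              (fun _ _ => Nat.zero_le _) (Finset.mem_univ 0)
    have hEv : votes Ob (Sum.inr 0) ≤ ∑ k : Fin (3*n+1), votes Ob (Sum.inr k) :=
      Finset.single_le_sum (f := fun k : Fin (3*n+1) => votes Ob (Sum.inr k))
        (fun _ _ => Nat.zero_le _) (Finset.mem_univ 0)
    have hA_le : (∑ j, av Ob (Sum.inl j)) ≤ ∑ j, votes Ob (Sum.inl j) :=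
      Finset.sum_le_sum (fun j _ => hav_le _)
    have hAv_eq : (∑ j, votes Ob (Sum.inl j)) = n := by omega
    have hpt : ∀ j, av Ob (Sum.inl j) = votes Ob (Sum.inl j) := by
      by_contra hx
      push_neg at hx
      obtain ⟨j₀, hj₀⟩ := hx
      have : (∑ j, av Ob (Sum.inl j)) < ∑ j, votes Ob (Sum.inl j) :=
        Finset.sum_lt_sum (fun j _ => hav_le _)
          ⟨j₀, Finset.mem_univ _, lt_of_le_of_ne (hav_le _) hj₀⟩
      omega
    have hAfromlt : ∀ (i : Fin (2*n)) (j : Fin m),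
        topParty (Ob i) = Sum.inl j → i.val < n := by
      intro i j hj
      by_contra h
      have hh := htopge i (by omega)
      rw [hh] at hj
      exact Sum.inr_ne_inl hj
    have hAcount : (∑ j, votes Ob (Sum.inl j))
        = ((univ : Finset (Fin (2*n))).filter
            fun i => ∃ j, topParty (Ob i) = Sum.inl j).card := by
      unfold votes
      simp_rw [Finset.card_filter]
      rw [Finset.sum_comm]
      apply Finset.sum_congr rfl
      intro i _
      by_cases hex : ∃ j, topParty (Ob i) = Sum.inl j
      · rw [if_pos hex, ← Finset.card_filter]
        obtain ⟨j₀, hj₀⟩ := hex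
        have : ((univ : Finset (Fin m)).filter
            fun j => ((Ob i) (Sum.inl j)).val = 0) = {j₀} := by
          ext j
          simp only [mem_filter, mem_univ, true_and, Finset.mem_singleton]
          rw [eq_top_iff, hj₀]
          constructor
          · intro h; exact Sum.inl_injective h
          · rintro rfl; rfl
        rw [this, Finset.card_singleton]
      · rw [if_neg hex, ← Finset.card_filter, Finset.card_eq_zero,
          Finset.filter_eq_empty_iff]
        intro j _ hcon
        exact hex ⟨j, ((eq_top_iff _ _).mp hcon).symm⟩
    have hfull : ((univ : Finset (Fin (2*n))).filter
          fun i => ∃ j, topParty (Ob i) = Sum.inl j)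
        = (univ.filter fun i : Fin (2*n) => i.val < n) := by
      apply Finset.eq_of_subset_of_card_le
      · intro i hi
        simp only [mem_filter, mem_univ, true_and] at hi ⊢
        obtain ⟨j, hj⟩ := hi
        exact hAfromlt i j hj
      · rw [card_voters_lt (by omega), ← hAcount, hAv_eq]
    have hvoteslt : ∀ (i : Fin (2*n)) (h : i.val < n),
        ∃ j, topParty (Ob i) = Sum.inl j ∧ (⟨i.val, h⟩ : Fin n) ∈ D j := by
      intro i h
      have hi : i ∈ ((univ : Finset (Fin (2*n))).filter
          fun i => ∃ j, topParty (Ob i) = Sum.inl j) := by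
        rw [hfull]
        simp only [mem_filter, mem_univ, true_and]
        exact h
      simp only [mem_filter, mem_univ, true_and] at hi
      obtain ⟨j, hj⟩ := hi
      refine ⟨j, hj, ?_⟩
      by_contra hz
      have h1 := inl_high' (O i) ⟨i.val, h⟩ D (hD3 _) (htop i) (hfc i h) (hfe i h) j hz
      have h2 : ((Ob i) (Sum.inl j)).val = 0 := (eq_top_iff _ _).mpr hj.symm
      have := invCount_ge (O i) (Ob i) (Sum.inl j) h2
      have := hcost_i i
      omega
    have hle4 : ∀ j, votes Ob (Sum.inl j) ≤ 4 := by
      intro j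
      rw [← hD4 j, votes]
      have hmemlt : ∀ i ∈ ((univ : Finset (Fin (2*n))).filter
          fun i => ((Ob i) (Sum.inl j)).val = 0), i.val < n := by
        intro i hi
        simp only [mem_filter, mem_univ, true_and] at hi
        exact hAfromlt i j ((eq_top_iff _ _).mp hi).symm
      apply Finset.card_le_card_of_injOn
        (fun i => if h : i.val < n then (⟨i.val, h⟩ : Fin n) else ⟨0, by omega⟩)
      · intro i hi
        have hlt := hmemlt i hi
        simp only [mem_coe, mem_filter, mem_univ, true_and] at hi
        have htpi : topParty (Ob i) = Sum.inl j := ((eq_top_iff _ _).mp hi).symm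
        obtain ⟨j', hj', hz⟩ := hvoteslt i hlt
        rw [htpi] at hj'
        have hjj : j' = j := (Sum.inl_injective hj').symm
        subst hjj
        simp only [dif_pos hlt]
        exact hz
      · intro i hi i' hi' heq
        have h := hmemlt i (by simpa using hi)
        have h' := hmemlt i' (by simpa using hi')
        dsimp only at heq
        rw [dif_pos h, dif_pos h'] at heq
        simp only [Fin.mk.injEq] at heq
        exact Fin.ext heq
    have hdichot : ∀ j, votes Ob (Sum.inl j) = 0 ∨ votes Ob (Sum.inl j) = 4 := by
      intro j
      have hp := hpt j
      have h4 := hle4 j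
      rw [av] at hp
      split at hp
      · right; omega
      · left; omega
    have hfullvote : ∀ j, votes Ob (Sum.inl j) = 4 → ∀ z ∈ D j,
        topParty (Ob (⟨z.val, by omega⟩ : Fin (2*n))) = Sum.inl j := by
      intro j hj4 z hz
      set Vj := (univ : Finset (Fin (2*n))).filter
        (fun i => ((Ob i) (Sum.inl j)).val = 0) with hVj
      set Cj := (univ : Finset (Fin (2*n))).filter
        (fun i => ∃ h : i.val < n, (⟨i.val, h⟩ : Fin n) ∈ D j) with hCj
      have hsub : Vj ⊆ Cj := by
        intro i hi
        simp only [hVj, hCj, mem_filter, mem_univ, true_and] at hi ⊢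
        have htpi : topParty (Ob i) = Sum.inl j := ((eq_top_iff _ _).mp hi).symm
        have hlt : i.val < n := hAfromlt i j htpi
        obtain ⟨j', hj', hzz⟩ := hvoteslt i hlt
        rw [htpi] at hj'
        have hjj : j' = j := (Sum.inl_injective hj').symm
        subst hjj
        exact ⟨hlt, hzz⟩
      have hCcard : Cj.card ≤ 4 := by
        rw [← hD4 j]
        apply Finset.card_le_card_of_injOn
          (fun i => if h : i.val < n then (⟨i.val, h⟩ : Fin n) else ⟨0, by omega⟩)
        · intro i hi
          simp only [hCj, mem_coe, mem_filter, mem_univ, true_and] at hi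
          obtain ⟨h, hzz⟩ := hi
          simp only [dif_pos h]
          exact hzz
        · intro i hi i' hi' heq
          simp only [hCj, Finset.mem_coe, mem_filter, mem_univ, true_and] at hi hi'
          obtain ⟨h, -⟩ := hi
          obtain ⟨h', -⟩ := hi'
          dsimp only at heq
          rw [dif_pos h, dif_pos h'] at heq
          simp only [Fin.mk.injEq] at heq
          exact Fin.ext heq
      have hVcard : Vj.card = 4 := by rw [hVj]; exact hj4
      have hVC : Vj = Cj := Finset.eq_of_subset_of_card_le hsub (by omega)
      have hzlt : z.val < n := z.isLt
      have hmem : (⟨z.val, by omega⟩ : Fin (2*n)) ∈ Cj := by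
        simp only [hCj, mem_filter, mem_univ, true_and]
        refine ⟨hzlt, ?_⟩
        rw [Fin.eta]
        exact hz
      rw [← hVC] at hmem
      simp only [hVj, mem_filter, mem_univ, true_and] at hmem
      exact ((eq_top_iff _ _).mp hmem).symm
    refine ⟨univ.filter fun j => votes Ob (Sum.inl j) = 4, ?_, ?_⟩
    · intro j hj j' hj' hne
      simp only [mem_filter, mem_univ, true_and] at hj hj'
      rw [Finset.disjoint_left]
      intro z hzj hzj'
      have e1 := hfullvote j hj z hzj
      have e2 := hfullvote j' hj' z hzj'
      rw [e1] at e2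
      exact hne (Sum.inl_injective e2)
    · rw [Finset.eq_univ_iff_forall]
      intro z
      rw [Finset.mem_biUnion]
      have hzlt : z.val < n := z.isLt
      obtain ⟨j, hj, hzD⟩ := hvoteslt (⟨z.val, by omega⟩ : Fin (2*n)) hzlt
      rw [Fin.eta] at hzD
      refine ⟨j, ?_, hzD⟩
      simp only [mem_filter, mem_univ, true_and]
      rcases hdichot j with h0 | h4
      · exfalso
        have hmem : (⟨z.val, by omega⟩ : Fin (2*n)) ∈ (univ : Finset (Fin (2*n))).filter
            (fun i => ((Ob i) (Sum.inl j)).val = 0) := by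
          simp only [mem_filter, mem_univ, true_and]
          exact (eq_top_iff _ _).mpr hj.symm
        have hposcard := Finset.card_pos.mpr ⟨_, hmem⟩
        rw [votes] at h0
        omega
      · exact h4
  · -- backward direction: from an exact cover, construct the bribe
    rintro ⟨J, hJdisj, hJcover⟩
    classical
    have hch : ∀ z : Fin n, ∃ j, j ∈ J ∧ z ∈ D j := by
      intro z
      have hz : z ∈ J.biUnion D := hJcover.symm ▸ Finset.mem_univ z
      simpa using Finset.mem_biUnion.mp hz
    set f : Fin n → Fin m := fun z => (hch z).choose with hf
    have hfJ : ∀ z, f z ∈ J := fun z => (hch z).choose_spec.1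
    have hfD : ∀ z, z ∈ D (f z) := fun z => (hch z).choose_spec.2
    have huniq : ∀ (z : Fin n) (j : Fin m), j ∈ J → z ∈ D j → f z = j := by
      intro z j hj hzj
      by_contra hne
      exact (Finset.disjoint_left.mp (hJdisj _ (hfJ z) _ hj hne)) (hfD z) hzj
    set v : ∀ i : Fin (2*n), i.val < n → Fin (m + (3*n+1)) :=
      fun i h => (O i) (Sum.inl (f ⟨i.val, h⟩)) with hv
    have hv13 : ∀ (i : Fin (2*n)) (h : i.val < n), 1 ≤ (v i h).val ∧ (v i h).val ≤ 3 :=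
      fun i h => (hfc i h (f ⟨i.val, h⟩)).mp (hfD _)
    set Ob : Fin (2*n) → Ord m n :=
      fun i => if h : i.val < n then (O i).trans (Fin.cycleRange (v i h)) else O i with hOb
    have hOb_lt : ∀ (i : Fin (2*n)) (h : i.val < n),
        Ob i = (O i).trans (Fin.cycleRange (v i h)) := fun i h => dif_pos h
    have hOb_ge : ∀ (i : Fin (2*n)), n ≤ i.val → Ob i = O i :=
      fun i h => dif_neg (by omega)
    -- the vote counts
    have hvote_e1 : votes Ob (Sum.inr 0) = n := by
      have hset : ((univ : Finset (Fin (2*n))).filter fun i => ((Ob i) (Sum.inr 0)).val = 0)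
          = ((univ : Finset (Fin (2*n))).filter fun i => n ≤ i.val) := by
        ext i
        simp only [mem_filter, mem_univ, true_and]
        by_cases h : i.val < n
        · rw [hOb_lt i h]
          have h0 : (O i) (Sum.inr 0) < v i h := by
            rw [Fin.lt_iff_val_lt_val, htop i]
            exact (hv13 i h).1
          simp only [Equiv.trans_apply]
          rw [show ((Fin.cycleRange (v i h)) ((O i) (Sum.inr 0))).val
              = ((O i) (Sum.inr 0)).val + 1 from cr_val_of_lt h0]
          omega
        · rw [hOb_ge i (by omega)]
          exact ⟨fun _ => by omega, fun _ => htop i⟩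
      rw [votes, hset, card_voters_ge (by omega)]
    have hvote_ek : ∀ k : Fin (3*n+1), k ≠ 0 → votes Ob (Sum.inr k) = 0 := by
      intro k hk
      rw [votes, Finset.card_eq_zero, Finset.filter_eq_empty_iff]
      intro i _hi
      by_cases h : i.val < n
      · rw [hOb_lt i h]
        have h0 : v i h < (O i) (Sum.inr k) := by
          rw [Fin.lt_iff_val_lt_val]
          have := (hfe i h k hk).1
          have := (hv13 i h).2
          omega
        simp only [Equiv.trans_apply]
        rw [show ((Fin.cycleRange (v i h)) ((O i) (Sum.inr k))).val
            = ((O i) (Sum.inr k)).val from cr_val_of_gt h0]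
        have := (hfe i h k hk).1
        omega
      · rw [hOb_ge i (by omega)]
        have := (hse i (by omega) k hk).1
        omega
    have hvote_j : ∀ j ∈ J, 4 ≤ votes Ob (Sum.inl j) := by
      intro j hj
      rw [← hD4 j, votes]
      apply Finset.card_le_card_of_injOn (fun z => (⟨z.val, by omega⟩ : Fin (2*n)))
      · intro z hz
        simp only [mem_coe, mem_filter, mem_univ, true_and]
        set i : Fin (2*n) := ⟨z.val, by omega⟩ with hi
        have h : i.val < n := z.isLt
        have hzi : (⟨i.val, h⟩ : Fin n) = z := rfl
        have hfz : f z = j := huniq z j hj hz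
        rw [hOb_lt i h]
        simp only [Equiv.trans_apply]
        have : v i h = (O i) (Sum.inl j) := by
          rw [hv]
          simp only [hzi, hfz]
        rw [← this, cr_val_self]
      · intro z _ z' _ h
        simp only [Fin.mk.injEq] at h
        exact Fin.ext h
    have hJcard : 4 * J.card = n := by
      have h1 : (J.biUnion D).card = (Finset.univ : Finset (Fin n)).card := by rw [hJcover]
      rw [Finset.card_biUnion (fun j hj j' hj' hne => hJdisj j hj j' hj' hne)] at h1
      rw [Finset.sum_congr rfl (fun j _ => hD4 j), Finset.sum_const, smul_eq_mul,
        Finset.card_univ, Fintype.card_fin] at h1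
      omega
    refine ⟨Ob, ?_, ?_, ?_⟩
    · -- legality
      intro i x y hxy hyx
      by_cases h : i.val < n
      · rw [hOb_lt i h] at hyx
        simp only [Equiv.trans_apply] at hyx
        obtain ⟨hy, -⟩ := (cr_pair (v i h) ((O i) x) ((O i) y)).mp ⟨hxy, hyx⟩
        refine ⟨f ⟨i.val, h⟩, ?_⟩
        apply (O i).injective
        rw [hy, hv]
      · rw [hOb_ge i (by omega)] at hyx
        exact absurd hxy (not_lt.mpr hyx.le)
    · -- cost
      calc ∑ i, invCount (O i) (Ob i)
          ≤ ∑ i : Fin (2*n), (if i.val < n then 3 else 0) := by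
            apply Finset.sum_le_sum
            intro i _
            by_cases h : i.val < n
            · rw [hOb_lt i h, if_pos h, invCount_cycle]
              exact (hv13 i h).2
            · rw [hOb_ge i (by omega), if_neg h, invCount_self]
        _ = 3 * n := by
            rw [← Finset.sum_filter]
            rw [Finset.sum_const, smul_eq_mul, card_voters_lt (by omega)]
            ring
    · -- active votes
      have hE : (∑ k : Fin (3*n+1), av Ob (Sum.inr k)) = n := by
        rw [Finset.sum_eq_single_of_mem 0 (Finset.mem_univ 0)]
        · rw [av, hvote_e1, if_pos (by omega)]
        · intro k _ hk
          rw [av, hvote_ek k hk]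
          simp
      rw [hE]
      have h4 : ∀ j ∈ J, 4 ≤ av Ob (Sum.inl j) := by
        intro j hj
        rw [av, if_pos (hvote_j j hj)]
        exact hvote_j j hj
      calc n = 4 * J.card := hJcard.symm
        _ = ∑ _j ∈ J, 4 := by rw [Finset.sum_const, smul_eq_mul]; ring
        _ ≤ ∑ j ∈ J, av Ob (Sum.inl j) := Finset.sum_le_sum h4
        _ ≤ ∑ j : Fin m, av Ob (Sum.inl j) :=
            Finset.sum_le_sum_of_subset (Finset.subset_univ J)

end Stmt2
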